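/- For every integer a ≥ 1, the Frobenius number of the quadruple (21a+7, 21a+10, 42a+15, 42a+21) is g(21a+7, 21a+10, 42a+15, 42a+21) = 126a² + 84a + 13. -/

import Mathlib

/-- Membership in the closure of a 4-element set of naturals. -/
lemma mem_closure_quad {p q r s n : ℕ} :
    n ∈ AddSubmonoid.closure ({p, q, r, s} : Set ℕ) ↔
      ∃ w x y z : ℕ, w * p + x * q + y * r + z * s = n := by
  constructor
  · intro h
    induction h using AddSubmonoid.closure_induction with
    | mem u hu =>
      simp only [Set.mem_insert_iff, Set.mem_singleton_iff] at hu
      rcases hu with rfl | rfl | rfl | rfl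
      · exact ⟨1, 0, 0, 0, by ring⟩
      · exact ⟨0, 1, 0, 0, by ring⟩
      · exact ⟨0, 0, 1, 0, by ring⟩
      · exact ⟨0, 0, 0, 1, by ring⟩
    | zero => exact ⟨0, 0, 0, 0, by ring⟩
    | add n m _ _ hn hm =>
      obtain ⟨w1, x1, y1, z1, h1⟩ := hn
      obtain ⟨w2, x2, y2, z2, h2⟩ := hm
      exact ⟨w1 + w2, x1 + x2, y1 + y2, z1 + z2, by rw [← h1, ← h2]; ring⟩
  · rintro ⟨w, x, y, z, rfl⟩
    have hp : p ∈ AddSubmonoid.closure ({p, q, r, s} : Set ℕ) :=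
      AddSubmonoid.subset_closure (by simp)
    have hq : q ∈ AddSubmonoid.closure ({p, q, r, s} : Set ℕ) :=
      AddSubmonoid.subset_closure (by simp)
    have hr : r ∈ AddSubmonoid.closure ({p, q, r, s} : Set ℕ) :=
      AddSubmonoid.subset_closure (by simp)
    have hs : s ∈ AddSubmonoid.closure ({p, q, r, s} : Set ℕ) :=
      AddSubmonoid.subset_closure (by simp)
    exact add_mem (add_mem (add_mem (nsmul_mem hp w) (nsmul_mem hq x))
      (nsmul_mem hr y)) (nsmul_mem hs z)

/-- Key representability lemma: every residue `t ≤ 21a+6` can be written as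
`3x + y + 7z` with cost `x + 2y + 2z ≤ 6a + 2`. -/
lemma key_rep (a t : ℕ) (ha : 1 ≤ a) (ht : t ≤ 21 * a + 6) :
    ∃ x y z : ℕ, 3 * x + y + 7 * z = t ∧ x + 2 * y + 2 * z ≤ 6 * a + 2 := by
  obtain ⟨u, v, hv, rfl⟩ : ∃ u v : ℕ, v < 21 ∧ t = 21 * u + v :=
    ⟨t / 21, t % 21, Nat.mod_lt _ (by norm_num), (Nat.div_add_mod t 21).symm⟩
  by_cases hu : u < a
  · interval_cases v
    · exact ⟨0, 0, 3 * u, by omega, by omega⟩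
    · exact ⟨0, 1, 3 * u, by omega, by omega⟩
    · exact ⟨0, 2, 3 * u, by omega, by omega⟩
    · exact ⟨1, 0, 3 * u, by omega, by omega⟩
    · exact ⟨1, 1, 3 * u, by omega, by omega⟩
    · exact ⟨1, 2, 3 * u, by omega, by omega⟩
    · exact ⟨2, 0, 3 * u, by omega, by omega⟩
    · exact ⟨0, 0, 3 * u + 1, by omega, by omega⟩
    · exact ⟨0, 1, 3 * u + 1, by omega, by omega⟩
    · exact ⟨3, 0, 3 * u, by omega, by omega⟩
    · exact ⟨1, 0, 3 * u + 1, by omega, by omega⟩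
    · exact ⟨1, 1, 3 * u + 1, by omega, by omega⟩
    · exact ⟨4, 0, 3 * u, by omega, by omega⟩
    · exact ⟨2, 0, 3 * u + 1, by omega, by omega⟩
    · exact ⟨0, 0, 3 * u + 2, by omega, by omega⟩
    · exact ⟨5, 0, 3 * u, by omega, by omega⟩
    · exact ⟨3, 0, 3 * u + 1, by omega, by omega⟩
    · exact ⟨1, 0, 3 * u + 2, by omega, by omega⟩
    · exact ⟨6, 0, 3 * u, by omega, by omega⟩
    · exact ⟨4, 0, 3 * u + 1, by omega, by omega⟩
    · exact ⟨2, 0, 3 * u + 2, by omega, by omega⟩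
  · -- here u = a and v ≤ 6
    have hua : u = a := by omega
    subst hua
    have hv6 : v ≤ 6 := by omega
    interval_cases v
    · exact ⟨0, 0, 3 * u, by omega, by omega⟩
    · exact ⟨0, 1, 3 * u, by omega, by omega⟩
    · exact ⟨3, 0, 3 * u - 1, by omega, by omega⟩
    · exact ⟨1, 0, 3 * u, by omega, by omega⟩
    · exact ⟨6, 0, 3 * u - 2, by omega, by omega⟩
    · exact ⟨4, 0, 3 * u - 1, by omega, by omega⟩
    · exact ⟨2, 0, 3 * u, by omega, by omega⟩

/-- For every integer `a ≥ 1`, the Frobenius number of the quadruple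
`(21a+7, 21a+10, 42a+15, 42a+21)` is `126a² + 84a + 13`. -/
theorem frobenius_quadruple_case2 (a : ℕ) (ha : 1 ≤ a) :
    FrobeniusNumber (126 * a ^ 2 + 84 * a + 13)
      ({21 * a + 7, 21 * a + 10, 42 * a + 15, 42 * a + 21} : Set ℕ) := by
  constructor
  · -- the Frobenius number is not representable
    intro h
    rw [mem_closure_quad] at h
    obtain ⟨w, x, y, z, h⟩ := h
    -- pass to integers
    have h' : (w : ℤ) * (21 * a + 7) + x * (21 * a + 10) + y * (42 * a + 15)
        + z * (42 * a + 21) = 126 * (a : ℤ) ^ 2 + 84 * a + 13 := by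
      exact_mod_cast h
    set K : ℤ := (w : ℤ) + x + 2 * y + 2 * z with hK
    set S : ℤ := 3 * (x : ℤ) + y + 7 * z with hS
    have hE : K * (21 * (a : ℤ) + 7) + S + 1 = (6 * a + 2) * (21 * a + 7) := by
      rw [hK, hS]; linear_combination h'
    have hSnn : 0 ≤ S := by positivity
    have hKnn : 0 ≤ K := by positivity
    have h2S : 2 * S ≤ 7 * K := by
      rw [hK, hS]
      have : (0:ℤ) ≤ w := by positivity
      have : (0:ℤ) ≤ y := by positivity
      have : (0:ℤ) ≤ x := by positivity
      linarith
    have ha' : (1 : ℤ) ≤ a := by exact_mod_cast ha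
    -- K ≤ 6a+1
    have hKle : K ≤ 6 * (a : ℤ) + 1 := by nlinarith
    -- d := 6a+2 - K ≥ 1 and d * (21a+7) = S + 1
    have hd1 : (1 : ℤ) ≤ 6 * (a : ℤ) + 2 - K := by linarith
    have hdm : (6 * (a : ℤ) + 2 - K) * (21 * a + 7) = S + 1 := by linarith [hE]; 
    nlinarith [mul_le_mul_of_nonneg_right hd1 (by linarith : (0:ℤ) ≤ 21 * (a:ℤ) + 7)]
  · -- every non-representable number is at most the Frobenius number
    intro k hk
    simp only [Set.mem_setOf_eq] at hk
    by_contra hlt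
    push_neg at hlt
    apply hk
    rw [mem_closure_quad]
    have hm : 0 < 21 * a + 7 := by omega
    set q := k / (21 * a + 7) with hq
    set t := k % (21 * a + 7) with ht
    have hqt : (21 * a + 7) * q + t = k := Nat.div_add_mod k (21 * a + 7)
    have htlt : t < 21 * a + 7 := Nat.mod_lt _ hm
    have hklb : (6 * a + 2) * (21 * a + 7) ≤ k := by nlinarith
    have hqge : 6 * a + 2 ≤ q := by
      rw [hq]
      rw [Nat.le_div_iff_mul_le hm]
      linarith
    obtain ⟨x, y, z, hrep, hcost⟩ := key_rep a t ha (by omega)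
    refine ⟨q - (x + 2 * y + 2 * z), x, y, z, ?_⟩
    have hw : q - (x + 2 * y + 2 * z) + (x + 2 * y + 2 * z) = q := by omega
    set w := q - (x + 2 * y + 2 * z) with hwdef
    have : w * (21 * a + 7) + x * (21 * a + 10) + y * (42 * a + 15) + z * (42 * a + 21)
        = (w + (x + 2 * y + 2 * z)) * (21 * a + 7) + (3 * x + y + 7 * z) := by ring
    rw [this, hw, hrep, mul_comm, hqt]
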